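/- arXiv:1612.01315 — 2 statements merged into one kernel-verified Lean document; each statement's English description precedes it below -/
import Mathlib

section
/- Let n ≥ 2, let ζ be a primitive n-th root of unity in ℂ, and let A, F ∈ ℂ(X) be nonconstant rational functions with A(X^n) = F(X)^n and F(ζX) = ζ^r · F(X) for some integer r with gcd(r, n) = 1. Set m = deg F (which equals deg A). Then m ≥ n, unless there exists c ∈ ℂ, c ≠ 0, such that either F = c·X^m and A = c^n·X^m, or F = c·X^{−m} and A = c^n·X^{−m}. -/
open Polynomial OnePoint
open scoped Classical

noncomputable section

namespace GenLattes

/-- Composition of rational functions: `rcomp f g = f ∘ g`. -/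
def rcomp (f g : RatFunc ℂ) : RatFunc ℂ :=
  Polynomial.aeval g f.num / Polynomial.aeval g f.denom

/-- The degree of a rational function: the maximum of the degrees of its numerator and
denominator in lowest terms. -/
def rdeg (f : RatFunc ℂ) : ℕ := max f.num.natDegree f.denom.natDegree

/-- Evaluation of a rational function at a finite point, with value in the Riemann
sphere `ℂP¹ = OnePoint ℂ`. -/
def evalF (f : RatFunc ℂ) (z : ℂ) : OnePoint ℂ :=
  if f.denom.eval z = 0 then ∞ else ((f.num.eval z / f.denom.eval z : ℂ) : OnePoint ℂ)

/-- The local degree (local multiplicity) of a rational function at a finite point. -/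
def locDegF (f : RatFunc ℂ) (z : ℂ) : ℕ :=
  if f.denom.eval z = 0 then rootMultiplicity z f.denom
  else rootMultiplicity z (f.num - Polynomial.C (f.num.eval z / f.denom.eval z) * f.denom)

/-- The rational function `f(1/X)`. -/
def flip (f : RatFunc ℂ) : RatFunc ℂ := rcomp f (RatFunc.X)⁻¹

/-- The self-map of the Riemann sphere `ℂP¹ = OnePoint ℂ` induced by a rational function. -/
def evalOP (f : RatFunc ℂ) (x : OnePoint ℂ) : OnePoint ℂ :=
  OnePoint.rec (evalF (flip f) 0) (fun z => evalF f z) x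

/-- The local degree `deg_x f` of a rational function at a point of the Riemann sphere. -/
def locDeg (f : RatFunc ℂ) (x : OnePoint ℂ) : ℕ :=
  OnePoint.rec (locDegF (flip f) 0) (fun z => locDegF f z) x

/-- The iterate `f^{∘l}` of a rational function (with `riter f 0 = X = id`). -/
def riter (f : RatFunc ℂ) : ℕ → RatFunc ℂ
  | 0 => RatFunc.X
  | l + 1 => rcomp f (riter f l)

/-- An orbifold on the Riemann sphere: a ramification function `ν : ℂP¹ → ℕ` with
`ν(z) ≥ 1` everywhere and `ν(z) = 1` outside a finite set. -/
structure Orbifold where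
  nu : OnePoint ℂ → ℕ
  one_le : ∀ z, 1 ≤ nu z
  finite : {z : OnePoint ℂ | nu z ≠ 1}.Finite

/-- A good orbifold: it is forbidden to have exactly one point with `ν > 1`, or exactly
two such points with different values of `ν`. -/
def Orbifold.Good (O : Orbifold) : Prop :=
  (¬ ∃ z, {w : OnePoint ℂ | O.nu w ≠ 1} = {z}) ∧
  (¬ ∃ z₁ z₂, z₁ ≠ z₂ ∧ {w : OnePoint ℂ | O.nu w ≠ 1} = {z₁, z₂} ∧ O.nu z₁ ≠ O.nu z₂)

/-- A nontrivial orbifold (distinct from the non-ramified sphere). -/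
def Orbifold.IsNontrivial (O : Orbifold) : Prop := ∃ z, 1 < O.nu z

/-- The relation `O₁ ⪯ O₂`: pointwise divisibility of ramification functions. -/
def Orbifold.Prec (O₁ O₂ : Orbifold) : Prop := ∀ z, O₁.nu z ∣ O₂.nu z

/-- The signature of an orbifold: the multiset of values of `ν` on `c(O) = {ν > 1}`. -/
def Orbifold.signature (O : Orbifold) : Multiset ℕ := O.finite.toFinset.val.map O.nu

/-- The Euler characteristic `χ(O) = 2 + Σ (1/ν(z) - 1)`. -/
def Orbifold.eulerChar (O : Orbifold) : ℚ :=
  2 + ∑ z ∈ O.finite.toFinset, ((O.nu z : ℚ)⁻¹ - 1)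

/-- `A : O₁ → O₂` is a holomorphic map between orbifolds:
`ν₂(A(z)) ∣ ν₁(z)·deg_z A` for all `z`. -/
def IsHolo (A : RatFunc ℂ) (O₁ O₂ : Orbifold) : Prop :=
  ∀ z, O₂.nu (evalOP A z) ∣ O₁.nu z * locDeg A z

/-- `A : O₁ → O₂` is a minimal holomorphic map between orbifolds:
`ν₂(A(z)) = ν₁(z)·gcd(deg_z A, ν₂(A(z)))` for all `z`. -/
def IsMinHolo (A : RatFunc ℂ) (O₁ O₂ : Orbifold) : Prop :=
  ∀ z, O₂.nu (evalOP A z) = O₁.nu z * Nat.gcd (locDeg A z) (O₂.nu (evalOP A z))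

/-- `A : O₁ → O₂` is a covering map between orbifolds:
`ν₂(A(z)) = ν₁(z)·deg_z A` for all `z`. -/
def IsCovering (A : RatFunc ℂ) (O₁ O₂ : Orbifold) : Prop :=
  ∀ z, O₂.nu (evalOP A z) = O₁.nu z * locDeg A z

/-- `A` and `B` are conjugate by a Möbius transformation: `A = μ ∘ B ∘ μ⁻¹`. -/
def Conjugate (A B : RatFunc ℂ) : Prop :=
  ∃ μ ν : RatFunc ℂ, rcomp μ ν = RatFunc.X ∧ rcomp ν μ = RatFunc.X ∧
    A = rcomp (rcomp μ B) ν

/-- The Chebyshev polynomial `T_d` viewed as a rational function. -/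
def chebyRF (d : ℕ) : RatFunc ℂ :=
  algebraMap (Polynomial ℂ) (RatFunc ℂ) (Polynomial.Chebyshev.T ℂ d)

end GenLattes

namespace GenLattes

private lemma aeval_map (p s : ℂ[X]) :
    Polynomial.aeval (algebraMap ℂ[X] (RatFunc ℂ) s) p = algebraMap _ _ (p.comp s) := by
  rw [Polynomial.comp_eq_aeval]
  simpa using Polynomial.aeval_algHom_apply (IsScalarTower.toAlgHom ℂ ℂ[X] (RatFunc ℂ)) s p

private lemma comp_ne_zero' {p s : ℂ[X]} (hp : p ≠ 0) (hs : s.natDegree ≠ 0) :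
    p.comp s ≠ 0 := by
  intro h
  rcases (Polynomial.comp_eq_zero_iff).mp h with h | ⟨_, h⟩
  · exact hp h
  · exact hs (by rw [h]; simp)

private lemma coeff_comp_scale (p : ℂ[X]) (ζ : ℂ) (k : ℕ) :
    (p.comp (C ζ * X)).coeff k = ζ ^ k * p.coeff k := by
  induction p using Polynomial.induction_on' with
  | add p q hp hq => simp [add_comp, hp, hq, mul_add]
  | monomial i a =>
      rw [monomial_comp, mul_pow, ← C_pow, ← mul_assoc, ← C_mul]
      rw [coeff_C_mul, coeff_X_pow, coeff_monomial]
      split_ifs with h1 h2 h2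
      · subst h1; ring
      · exact absurd h1.symm h2
      · exact absurd h2.symm h1
      · ring

private lemma eq_monomial {p : ℂ[X]} (d : ℕ) (h : ∀ k, p.coeff k ≠ 0 → k = d) :
    p = C (p.coeff d) * X ^ d := by
  ext k
  rw [coeff_C_mul, coeff_X_pow]
  by_cases hk : k = d
  · simp [hk]
  · simp only [hk, if_false, mul_zero]
    by_contra hne
    exact hk (h k hne)

private lemma rcomp_div (p q s : ℂ[X]) (hq : q ≠ 0) (hs : s.natDegree ≠ 0) :
    rcomp (algebraMap ℂ[X] (RatFunc ℂ) p / algebraMap _ _ q) (algebraMap _ _ s)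
      = algebraMap _ _ (p.comp s) / algebraMap _ _ (q.comp s) := by
  set f := algebraMap ℂ[X] (RatFunc ℂ) p / algebraMap _ _ q with hf
  have hfd : f.denom ≠ 0 := f.denom_ne_zero
  have hcross : f.num * q = p * f.denom := by
    apply RatFunc.algebraMap_injective ℂ
    rw [map_mul, map_mul]
    rw [← div_eq_div_iff (RatFunc.algebraMap_ne_zero hfd) (RatFunc.algebraMap_ne_zero hq)]
    rw [RatFunc.num_div_denom]
  rw [rcomp, aeval_map, aeval_map]
  rw [div_eq_div_iff (RatFunc.algebraMap_ne_zero (comp_ne_zero' hfd hs))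
    (RatFunc.algebraMap_ne_zero (comp_ne_zero' hq hs))]
  rw [← map_mul, ← map_mul, ← mul_comp, ← mul_comp, hcross]

private lemma comp_cancel {p q : ℂ[X]} {n : ℕ} (hn : n ≠ 0)
    (h : p.comp (X ^ n) = q.comp (X ^ n)) : p = q := by
  by_contra hne
  have h0 : (p - q).comp (X ^ n) = 0 := by rw [sub_comp, h, sub_self]
  exact comp_ne_zero' (sub_ne_zero.mpr hne) (by simp [hn]) h0

private lemma rcomp_div_pow (p q : ℂ[X]) (hq : q ≠ 0) {n : ℕ} (hn : n ≠ 0) :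
    rcomp (algebraMap ℂ[X] (RatFunc ℂ) p / algebraMap _ _ q) (RatFunc.X ^ n)
      = algebraMap _ _ (p.comp (X ^ n)) / algebraMap _ _ (q.comp (X ^ n)) := by
  have hX : (RatFunc.X : RatFunc ℂ) ^ n = algebraMap ℂ[X] _ (Polynomial.X ^ n) := by
    rw [map_pow, RatFunc.algebraMap_X]
  rw [hX, rcomp_div p q _ hq (by simp [hn])]

private lemma rcomp_pow_inj {A B : RatFunc ℂ} {n : ℕ} (hn : n ≠ 0)
    (h : rcomp A (RatFunc.X ^ n) = rcomp B (RatFunc.X ^ n)) : A = B := by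
  rw [← RatFunc.num_div_denom A, ← RatFunc.num_div_denom B] at h ⊢
  rw [rcomp_div_pow _ _ A.denom_ne_zero hn, rcomp_div_pow _ _ B.denom_ne_zero hn] at h
  have hs : (Polynomial.X ^ n : ℂ[X]).natDegree ≠ 0 := by simp [hn]
  rw [div_eq_div_iff (RatFunc.algebraMap_ne_zero (comp_ne_zero' A.denom_ne_zero hs))
    (RatFunc.algebraMap_ne_zero (comp_ne_zero' B.denom_ne_zero hs)),
    ← map_mul, ← map_mul] at h
  have h2 := RatFunc.algebraMap_injective ℂ h
  rw [← mul_comp, ← mul_comp] at h2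
  have h3 := comp_cancel hn h2
  rw [div_eq_div_iff (RatFunc.algebraMap_ne_zero A.denom_ne_zero)
    (RatFunc.algebraMap_ne_zero B.denom_ne_zero), ← map_mul, ← map_mul, h3]

private lemma monomial_of_self_dvd_scale {p : ℂ[X]} (hp : p ≠ 0) {ζ : ℂ} (hzne : ζ ≠ 0)
    {n : ℕ} (hζ : IsPrimitiveRoot ζ n) (hdeg : p.natDegree < n)
    (hdvd : p ∣ p.comp (C ζ * X)) :
    p = C (p.coeff p.natDegree) * X ^ p.natDegree := by
  have hs : (C ζ * X : ℂ[X]).natDegree = 1 := by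
    simp [hzne]
  obtain ⟨k, hk⟩ := hdvd
  have hcne : p.comp (C ζ * X) ≠ 0 := comp_ne_zero' hp (by rw [hs]; exact one_ne_zero)
  have hk0 : k ≠ 0 := by rintro rfl; rw [mul_zero] at hk; exact hcne hk
  have hdk : k.natDegree = 0 := by
    have h1 : (p.comp (C ζ * X)).natDegree = p.natDegree := by
      rw [natDegree_comp, hs, mul_one]
    rw [hk, natDegree_mul hp hk0] at h1
    omega
  set c := k.coeff 0 with hcdef
  have hc : k = C c := eq_C_of_natDegree_eq_zero hdk
  have hrel : ∀ j, ζ ^ j * p.coeff j = p.coeff j * c := by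
    intro j
    have := congrArg (fun q => Polynomial.coeff q j) hk
    simp only [coeff_comp_scale, hc, coeff_mul_C] at this
    exact this
  have hlc : p.coeff p.natDegree ≠ 0 := by
    rw [← leadingCoeff]; exact leadingCoeff_ne_zero.mpr hp
  have hcval : c = ζ ^ p.natDegree := by
    have h := hrel p.natDegree
    rw [mul_comm (p.coeff _) c] at h
    exact (mul_right_cancel₀ hlc h).symm
  apply eq_monomial
  intro j hj
  have hjd : j ≤ p.natDegree := le_natDegree_of_ne_zero hj
  have hzz : ζ ^ j = ζ ^ p.natDegree := by
    have := hrel j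
    rw [hcval, mul_comm (p.coeff j)] at this
    exact mul_right_cancel₀ hj this
  have hone : ζ ^ (p.natDegree - j) = 1 := by
    have : ζ ^ j * ζ ^ (p.natDegree - j) = ζ ^ j * 1 := by
      rw [← pow_add, mul_one, Nat.add_sub_cancel' hjd, hzz]
    exact mul_left_cancel₀ (pow_ne_zero j hzne) this
  have hdvdn : n ∣ p.natDegree - j := (hζ.pow_eq_one_iff_dvd _).mp hone
  have : p.natDegree - j = 0 := Nat.eq_zero_of_dvd_of_lt hdvdn (by omega)
  omega


/-- **Corollary (degree bound for good solutions of `A ∘ z^n = z^n ∘ F`).** With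
`m = deg F`, one has `m ≥ n` unless `F = c X^{±m}` and `A = c^n X^{±m}` for some
`c ≠ 0`. -/
theorem degree_bound_power (n : ℕ) (hn : 2 ≤ n) (ζ : ℂ) (hζ : IsPrimitiveRoot ζ n)
    (A F : RatFunc ℂ) (hA : 1 ≤ rdeg A) (hF : 1 ≤ rdeg F)
    (h1 : rcomp A (RatFunc.X ^ n) = F ^ n)
    (r : ℤ) (hr : Int.gcd r n = 1)
    (h2 : rcomp F (RatFunc.C ζ * RatFunc.X) = RatFunc.C (ζ ^ r) * F) :
    n ≤ rdeg F ∨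
      ∃ c : ℂ, c ≠ 0 ∧
        ((F = RatFunc.C c * RatFunc.X ^ rdeg F ∧
            A = RatFunc.C (c ^ n) * RatFunc.X ^ rdeg F) ∨
         (F = RatFunc.C c * (RatFunc.X ^ rdeg F)⁻¹ ∧
            A = RatFunc.C (c ^ n) * (RatFunc.X ^ rdeg F)⁻¹)) := by
  by_cases hnm : n ≤ rdeg F
  · exact Or.inl hnm
  right
  push_neg at hnm
  have hn0 : n ≠ 0 := by omega
  have hzne : ζ ≠ 0 := hζ.ne_zero hn0
  have hF0 : F ≠ 0 := by
    intro h
    rw [h] at hF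
    simp [rdeg] at hF
  set P := F.num with hPdef
  set Q := F.denom with hQdef
  have hP0 : P ≠ 0 := RatFunc.num_ne_zero hF0
  have hQ0 : Q ≠ 0 := F.denom_ne_zero
  have hrdeg : rdeg F = max P.natDegree Q.natDegree := rfl
  set u : ℂ := ζ ^ r with hudef
  have hu : u ≠ 0 := zpow_ne_zero r hzne
  have hcop : IsCoprime P Q := RatFunc.isCoprime_num_denom F
  have hCX : (RatFunc.C ζ * RatFunc.X : RatFunc ℂ) = algebraMap ℂ[X] _ (C ζ * X) := by
    rw [map_mul, RatFunc.algebraMap_C, RatFunc.algebraMap_X]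
  have hsdeg : (C ζ * X : ℂ[X]).natDegree ≠ 0 := by simp [hzne]
  rw [← RatFunc.num_div_denom F, hCX, rcomp_div _ _ _ hQ0 hsdeg,
    ← mul_div_assoc, ← RatFunc.algebraMap_C u, ← map_mul,
    div_eq_div_iff (RatFunc.algebraMap_ne_zero (comp_ne_zero' hQ0 hsdeg))
      (RatFunc.algebraMap_ne_zero hQ0), ← map_mul, ← map_mul] at h2
  have hstar := RatFunc.algebraMap_injective ℂ h2
  -- hstar : P.comp (C ζ * X) * Q = C u * P * Q.comp (C ζ * X)
  have hPdvd : P ∣ P.comp (C ζ * X) := by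
    refine hcop.dvd_of_dvd_mul_right ?_
    rw [hstar]
    exact ⟨C u * Q.comp (C ζ * X), by ring⟩
  have hQdvd : Q ∣ Q.comp (C ζ * X) := by
    have h1' : Q ∣ (C u * Q.comp (C ζ * X)) * P := by
      refine ⟨P.comp (C ζ * X), ?_⟩
      linear_combination -hstar
    obtain ⟨k', hk'⟩ := hcop.symm.dvd_of_dvd_mul_right h1'
    refine ⟨C u⁻¹ * k', ?_⟩
    have hqq : Q.comp (C ζ * X) = C u⁻¹ * (C u * Q.comp (C ζ * X)) := by
      rw [← mul_assoc, ← C_mul, inv_mul_cancel₀ hu, C_1, one_mul]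
    rw [hqq, hk']; ring
  have hnm' : max P.natDegree Q.natDegree < n := by rw [← hrdeg]; exact hnm
  have hPmon := monomial_of_self_dvd_scale hP0 hzne hζ
    (lt_of_le_of_lt (le_max_left _ _) hnm') hPdvd
  have hQmon := monomial_of_self_dvd_scale hQ0 hzne hζ
    (lt_of_le_of_lt (le_max_right _ _) hnm') hQdvd
  have hQlc : Q.coeff Q.natDegree = 1 := F.monic_denom.coeff_natDegree
  rw [hQlc, C_1, one_mul] at hQmon
  have hmin : P.natDegree = 0 ∨ Q.natDegree = 0 := by
    by_contra hcon
    push_neg at hcon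
    obtain ⟨hc1, hc2⟩ := hcon
    have hXP : (X : ℂ[X]) ∣ P := by
      rw [hPmon]; exact Dvd.dvd.mul_left (dvd_pow_self X hc1) _
    have hXQ : (X : ℂ[X]) ∣ Q := by
      rw [hQmon]; exact dvd_pow_self X hc2
    exact Polynomial.not_isUnit_X (hcop.isUnit_of_dvd' hXP hXQ)
  rcases hmin with hdP0 | hdQ0
  · -- P.natDegree = 0 : F = C p * (X^d)⁻¹
    rw [hdP0, pow_zero, mul_one] at hPmon
    set p := P.coeff 0 with hpdef
    have hp : p ≠ 0 := by
      intro h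
      rw [h, C_0] at hPmon
      exact hP0 hPmon
    obtain ⟨d, hd⟩ : ∃ d, Q.natDegree = d := ⟨_, rfl⟩
    rw [hd] at hQmon
    have hm' : rdeg F = d := by rw [hrdeg, hdP0, hd]; simp
    have hFval : F = RatFunc.C p * (RatFunc.X ^ d)⁻¹ := by
      conv_lhs => rw [← RatFunc.num_div_denom F]
      rw [← hPdef, ← hQdef, hPmon, hQmon, map_pow (algebraMap ℂ[X] (RatFunc ℂ)) X d,
        RatFunc.algebraMap_X, RatFunc.algebraMap_C, div_eq_mul_inv]
    have hAcomp : rcomp (RatFunc.C (p ^ n) * (RatFunc.X ^ d)⁻¹)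
        (RatFunc.X ^ n) = F ^ n := by
      have e1 : (RatFunc.C (p ^ n) * (RatFunc.X ^ d)⁻¹ : RatFunc ℂ)
          = algebraMap ℂ[X] (RatFunc ℂ) (C (p ^ n)) / algebraMap ℂ[X] (RatFunc ℂ) (X ^ d) := by
        rw [map_pow (algebraMap ℂ[X] (RatFunc ℂ)) X d, RatFunc.algebraMap_X,
          RatFunc.algebraMap_C, div_eq_mul_inv]
      have e2 : ((X ^ d : ℂ[X]).comp (X ^ n)) = X ^ (d * n) := by
        rw [X_pow_comp, ← pow_mul, mul_comm n d]
      rw [e1, rcomp_div_pow _ _ (pow_ne_zero _ Polynomial.X_ne_zero) hn0, C_comp, e2, hFval,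
        map_pow (algebraMap ℂ[X] (RatFunc ℂ)) X (d * n), RatFunc.algebraMap_X,
        RatFunc.algebraMap_C, div_eq_mul_inv, mul_pow,
        ← map_pow RatFunc.C p n, inv_pow, ← pow_mul]
    have hA' := rcomp_pow_inj hn0 (h1.trans hAcomp.symm)
    exact ⟨p, hp, Or.inr ⟨by rw [hm']; exact hFval, by rw [hm']; exact hA'⟩⟩
  · -- Q.natDegree = 0 : F = C p * X^d
    rw [hdQ0, pow_zero] at hQmon
    set p := P.coeff P.natDegree with hpdef
    have hp : p ≠ 0 := by
      rw [hpdef, ← leadingCoeff]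
      exact leadingCoeff_ne_zero.mpr hP0
    obtain ⟨d, hd⟩ : ∃ d, P.natDegree = d := ⟨_, rfl⟩
    rw [hd] at hPmon
    have hm' : rdeg F = d := by rw [hrdeg, hdQ0, hd]; simp
    have hFval : F = RatFunc.C p * RatFunc.X ^ d := by
      conv_lhs => rw [← RatFunc.num_div_denom F]
      rw [← hPdef, ← hQdef, hQmon, map_one, div_one, hPmon, map_mul,
        map_pow (algebraMap ℂ[X] (RatFunc ℂ)) X d, RatFunc.algebraMap_C, RatFunc.algebraMap_X]
    have hAcomp : rcomp (RatFunc.C (p ^ n) * RatFunc.X ^ d)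
        (RatFunc.X ^ n) = F ^ n := by
      have e1 : (RatFunc.C (p ^ n) * RatFunc.X ^ d : RatFunc ℂ)
          = algebraMap ℂ[X] (RatFunc ℂ) (C (p ^ n) * X ^ d)
            / algebraMap ℂ[X] (RatFunc ℂ) (1 : ℂ[X]) := by
        rw [map_one, div_one, map_mul, map_pow (algebraMap ℂ[X] (RatFunc ℂ)) X d,
          RatFunc.algebraMap_C, RatFunc.algebraMap_X]
      have e2 : ((C (p ^ n) * X ^ d : ℂ[X]).comp (X ^ n)) = C (p ^ n) * X ^ (d * n) := by
        rw [mul_comp, C_comp, X_pow_comp, ← pow_mul, mul_comm n d]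
      rw [e1, rcomp_div_pow _ _ one_ne_zero hn0, one_comp, map_one, div_one, e2, hFval,
        map_mul, map_pow (algebraMap ℂ[X] (RatFunc ℂ)) X (d * n), RatFunc.algebraMap_C,
        RatFunc.algebraMap_X, mul_pow, ← map_pow RatFunc.C p n, ← pow_mul]
    have hA' := rcomp_pow_inj hn0 (h1.trans hAcomp.symm)
    exact ⟨p, hp, Or.inl ⟨by rw [hm']; exact hFval, by rw [hm']; exact hA'⟩⟩
end GenLattes
end
end

section
/- Let n > 2 and let ζ be a primitive n-th root of unity in ℂ. A nonconstant rational function F ∈ ℂ(X) satisfies both: (i) F(ζX) = ζ^r · F(X) for some integer r with gcd(r, n) = 1, and (ii) F(X) · F(X⁻¹) = ζ^k for some integer k, if and only if F = ε · X^r · R(X^n) for some ε ∈ ℂ with ε^{2n} = 1, some integer r with gcd(r, n) = 1, and some R ∈ ℂ(X) with R(X) · R(X⁻¹) = 1. Moreover, in that case there exists a (necessarily unique) rational function A ∈ ℂ(X) with A((X^n + X^{−n})/2) = (F(X)^n + F(X)^{−n})/2, and this A satisfies A((X + X⁻¹)/2) = ε^n · (G(X) + G(X)⁻¹)/2, where G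 = X^r · R(X)^n. -/
open Polynomial OnePoint
open scoped Classical

noncomputable section

namespace GenLattes

lemma ratX_ne_C (c : ℂ) : (RatFunc.X : RatFunc ℂ) ≠ RatFunc.C c := by
  intro h
  rw [← RatFunc.algebraMap_X, ← RatFunc.algebraMap_C c] at h
  exact Polynomial.X_ne_C c (RatFunc.algebraMap_injective ℂ h)

lemma transcendental_of_not_const {g : RatFunc ℂ} (hg : ∀ c : ℂ, g ≠ RatFunc.C c) :
    Transcendental ℂ g := by
  intro halg
  have hint : IsIntegral ℂ g := halg.isIntegral
  have hirr := minpoly.irreducible hint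
  have hdeg := IsAlgClosed.degree_eq_one_of_irreducible ℂ hirr
  set P := minpoly ℂ g with hP
  have hab : P = Polynomial.C (P.coeff 1) * Polynomial.X + Polynomial.C (P.coeff 0) :=
    Polynomial.eq_X_add_C_of_degree_le_one hdeg.le
  set a := P.coeff 1
  set b := P.coeff 0
  have ha : a ≠ 0 := by
    intro h0
    rw [hab, h0, map_zero, zero_mul, zero_add] at hdeg
    have : (1 : WithBot ℕ) ≤ 0 := hdeg ▸ Polynomial.degree_C_le
    norm_num at this
  have haev := minpoly.aeval ℂ g
  rw [← hP, hab] at haev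
  simp only [map_add, map_mul, Polynomial.aeval_C, Polynomial.aeval_X,
    RatFunc.algebraMap_eq_C] at haev
  have hCa : (RatFunc.C a : RatFunc ℂ) ≠ 0 := by
    simpa [← RatFunc.algebraMap_eq_C] using
      (map_ne_zero (algebraMap ℂ (RatFunc ℂ))).mpr ha
  refine hg (-b / a) ?_
  rw [map_div₀, map_neg]
  field_simp
  linear_combination haev

lemma trans_ne_zero {g : RatFunc ℂ} (hg : Transcendental ℂ g) {p : Polynomial ℂ}
    (hp : p ≠ 0) : Polynomial.aeval g p ≠ 0 :=
  fun h => hp (transcendental_iff.mp hg p h)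

/-- substitution X ↦ g as an algebra homomorphism -/
def subst {g : RatFunc ℂ} (hg : Transcendental ℂ g) : RatFunc ℂ →ₐ[ℂ] RatFunc ℂ :=
  RatFunc.liftAlgHom (Polynomial.aeval g) (fun p hp => by
    simp only [Submonoid.mem_comap]
    exact mem_nonZeroDivisors_of_ne_zero
      (trans_ne_zero hg (mem_nonZeroDivisors_iff_ne_zero.mp hp)))

lemma rcomp_eq_subst {g : RatFunc ℂ} (hg : Transcendental ℂ g) (F : RatFunc ℂ) :
    rcomp F g = subst hg F :=
  (RatFunc.liftAlgHom_apply _ _ F).symm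

lemma subst_div (hg : Transcendental ℂ g) (p q : Polynomial ℂ) :
    subst hg (algebraMap _ _ p / algebraMap _ _ q) = aeval g p / aeval g q :=
  RatFunc.liftAlgHom_apply_div _ _ p q

lemma subst_algebraMap {g : RatFunc ℂ} (hg : Transcendental ℂ g) (p : Polynomial ℂ) :
    subst hg (algebraMap _ _ p) = aeval g p := by
  have := subst_div hg p 1
  simpa using this

@[simp] lemma subst_X {g : RatFunc ℂ} (hg : Transcendental ℂ g) :
    subst hg RatFunc.X = g := by
  rw [← RatFunc.algebraMap_X, subst_algebraMap, Polynomial.aeval_X]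

@[simp] lemma subst_C {g : RatFunc ℂ} (hg : Transcendental ℂ g) (c : ℂ) :
    subst hg (RatFunc.C c) = RatFunc.C c := by
  rw [← RatFunc.algebraMap_C, subst_algebraMap, Polynomial.aeval_C]
  rfl

lemma subst_inj {g : RatFunc ℂ} (hg : Transcendental ℂ g) :
    Function.Injective (subst hg) := (subst hg).toRingHom.injective

lemma ratfunc_algHom_ext {φ ψ : RatFunc ℂ →ₐ[ℂ] RatFunc ℂ}
    (h : φ RatFunc.X = ψ RatFunc.X) : φ = ψ := by
  have hpoly : ∀ p : Polynomial ℂ, φ (algebraMap _ _ p) = ψ (algebraMap _ _ p) := by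
    have := Polynomial.algHom_ext (f := φ.comp (IsScalarTower.toAlgHom ℂ (Polynomial ℂ) (RatFunc ℂ)))
      (g := ψ.comp (IsScalarTower.toAlgHom ℂ (Polynomial ℂ) (RatFunc ℂ)))
      (by simpa [RatFunc.algebraMap_X] using h)
    intro p
    exact DFunLike.congr_fun this p
  ext F
  rw [← RatFunc.num_div_denom F, map_div₀, map_div₀, hpoly, hpoly]

lemma trans_subst {h : RatFunc ℂ} (hh : Transcendental ℂ h) {g : RatFunc ℂ}
    (hg : Transcendental ℂ g) : Transcendental ℂ (subst hh g) := by
  rw [transcendental_iff]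
  intro p hp
  rw [Polynomial.aeval_algHom_apply] at hp
  have := subst_inj hh (hp.trans (map_zero (subst hh)).symm)
  exact transcendental_iff.mp hg p this

lemma subst_subst {g h : RatFunc ℂ} (hg : Transcendental ℂ g) (hh : Transcendental ℂ h)
    (F : RatFunc ℂ) : subst hh (subst hg F) = subst (trans_subst hh hg) F := by
  have : (subst hh).comp (subst hg) = subst (trans_subst hh hg) :=
    ratfunc_algHom_ext (by simp)
  exact DFunLike.congr_fun this F


section Instances

instance : CharZero (RatFunc ℂ) :=
  charZero_of_injective_algebraMap ((algebraMap ℂ (RatFunc ℂ)).injective)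

lemma C_ne_zero {c : ℂ} (hc : c ≠ 0) : (RatFunc.C c : RatFunc ℂ) ≠ 0 :=
  fun h => hc (RatFunc.C.injective (by rw [h, map_zero]))

lemma two_ne_zero'' : (2 : RatFunc ℂ) ≠ 0 := by
  rw [show (2 : RatFunc ℂ) = RatFunc.C 2 from (map_ofNat RatFunc.C 2).symm]
  exact C_ne_zero (by norm_num)

lemma trans_X : Transcendental ℂ (RatFunc.X : RatFunc ℂ) :=
  transcendental_of_not_const ratX_ne_C

lemma trans_lin {c : ℂ} (hc : c ≠ 0) : Transcendental ℂ (RatFunc.C c * RatFunc.X) := by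
  refine transcendental_of_not_const (fun d h => ?_)
  have : (RatFunc.X : RatFunc ℂ) = RatFunc.C (c⁻¹ * d) := by
    calc (RatFunc.X : RatFunc ℂ)
        = RatFunc.C c⁻¹ * (RatFunc.C c * RatFunc.X) := by
          rw [← mul_assoc, ← map_mul, inv_mul_cancel₀ hc, map_one, one_mul]
      _ = RatFunc.C c⁻¹ * RatFunc.C d := by rw [h]
      _ = RatFunc.C (c⁻¹ * d) := (map_mul _ _ _).symm
  exact ratX_ne_C _ this

lemma ratX_pow_ne_C {m : ℕ} (hm : m ≠ 0) (c : ℂ) :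
    (RatFunc.X : RatFunc ℂ) ^ m ≠ RatFunc.C c := by
  intro h
  rw [← RatFunc.algebraMap_X, ← map_pow, ← RatFunc.algebraMap_C c] at h
  have := RatFunc.algebraMap_injective ℂ h
  have h2 := congrArg Polynomial.natDegree this
  rw [Polynomial.natDegree_X_pow, Polynomial.natDegree_C] at h2
  exact hm h2

lemma trans_pow {m : ℕ} (hm : m ≠ 0) : Transcendental ℂ ((RatFunc.X : RatFunc ℂ) ^ m) :=
  transcendental_of_not_const (ratX_pow_ne_C hm)

lemma trans_inv : Transcendental ℂ ((RatFunc.X : RatFunc ℂ)⁻¹) := by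
  refine transcendental_of_not_const (fun c h => ?_)
  rcases eq_or_ne c 0 with rfl | hc
  · rw [map_zero, inv_eq_zero] at h
    exact RatFunc.X_ne_zero h
  · have : (RatFunc.X : RatFunc ℂ) = RatFunc.C c⁻¹ := by
      rw [map_inv₀, ← h, inv_inv]
    exact ratX_ne_C _ this

lemma trans_w : Transcendental ℂ ((RatFunc.X + RatFunc.X⁻¹) / 2 : RatFunc ℂ) := by
  refine transcendental_of_not_const (fun c h => ?_)
  have hX : (RatFunc.X : RatFunc ℂ) ≠ 0 := RatFunc.X_ne_zero
  have h1 : RatFunc.X + RatFunc.X⁻¹ = RatFunc.C (2*c) := by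
    rw [div_eq_iff two_ne_zero''] at h
    rw [h, map_mul, map_ofNat]
    ring
  have h2 : (RatFunc.X : RatFunc ℂ)^2 + 1 = RatFunc.C (2*c) * RatFunc.X := by
    rw [← h1]
    field_simp
  rw [← RatFunc.algebraMap_X, ← map_pow, ← RatFunc.algebraMap_C (2*c), ← map_mul,
    ← map_one (algebraMap (Polynomial ℂ) (RatFunc ℂ)), ← map_add] at h2
  have := RatFunc.algebraMap_injective ℂ h2
  have h3 := congrArg (fun p => Polynomial.coeff p 2) this
  simp [Polynomial.coeff_one, Polynomial.coeff_X, Polynomial.coeff_C_mul] at h3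

end Instances


section PolyHelpers

lemma aeval_ratX (f : Polynomial ℂ) :
    Polynomial.aeval (RatFunc.X : RatFunc ℂ) f = algebraMap (Polynomial ℂ) (RatFunc ℂ) f := by
  have : (Polynomial.aeval (RatFunc.X : RatFunc ℂ) : Polynomial ℂ →ₐ[ℂ] RatFunc ℂ)
      = IsScalarTower.toAlgHom ℂ (Polynomial ℂ) (RatFunc ℂ) :=
    Polynomial.algHom_ext (by simp [RatFunc.algebraMap_X])
  exact DFunLike.congr_fun this f

/-- `algebraMap` of a composition is an `aeval`. -/
lemma algebraMap_comp (f g : Polynomial ℂ) :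
    algebraMap (Polynomial ℂ) (RatFunc ℂ) (f.comp g)
      = Polynomial.aeval (algebraMap (Polynomial ℂ) (RatFunc ℂ) g) f := by
  rw [← aeval_ratX, Polynomial.aeval_comp, aeval_ratX]

lemma algebraMap_expand (m : ℕ) (f : Polynomial ℂ) :
    algebraMap (Polynomial ℂ) (RatFunc ℂ) (Polynomial.expand ℂ m f)
      = Polynomial.aeval ((RatFunc.X : RatFunc ℂ) ^ m) f := by
  rw [← aeval_ratX, Polynomial.expand_aeval]

lemma comp_C_mul_X_coeff (f : Polynomial ℂ) (c : ℂ) (k : ℕ) :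
    (f.comp (Polynomial.C c * Polynomial.X)).coeff k = c ^ k * f.coeff k := by
  induction f using Polynomial.induction_on' with
  | add p q hp hq => simp [hp, hq, mul_add]
  | monomial e a =>
    rw [Polynomial.monomial_comp]
    rcases eq_or_ne e k with rfl | hek
    · rw [mul_pow, ← Polynomial.C_pow, ← mul_assoc, ← Polynomial.C_mul,
        Polynomial.coeff_C_mul, Polynomial.coeff_X_pow, if_pos rfl,
        Polynomial.coeff_monomial, if_pos rfl]
      ring
    · rw [mul_pow, ← Polynomial.C_pow, ← mul_assoc, ← Polynomial.C_mul]
      rw [Polynomial.coeff_C_mul, Polynomial.coeff_X_pow, if_neg (fun hh => hek hh.symm),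
        Polynomial.coeff_monomial, if_neg hek]
      ring

/-- A polynomial whose support is contained in multiples of `n` is an `expand`. -/
lemma eq_expand_contract {m : ℕ} (hm : m ≠ 0) {f : Polynomial ℂ}
    (hf : ∀ k, f.coeff k ≠ 0 → m ∣ k) :
    Polynomial.expand ℂ m (Polynomial.contract m f) = f := by
  ext k
  rw [Polynomial.coeff_expand (Nat.pos_of_ne_zero hm)]
  by_cases h : m ∣ k
  · rw [if_pos h, Polynomial.coeff_contract hm, Nat.div_mul_cancel h]
  · rw [if_neg h]
    by_contra hne
    exact h (hf k (fun h0 => hne h0.symm))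

lemma natDegree_reflect_le {f : Polynomial ℂ} {m : ℕ} (hf : f.natDegree ≤ m) :
    (Polynomial.reflect m f).natDegree ≤ m := by
  refine Polynomial.natDegree_le_iff_coeff_eq_zero.mpr (fun k hk => ?_)
  rw [Polynomial.coeff_reflect]
  apply Polynomial.coeff_eq_zero_of_natDegree_lt
  rw [Polynomial.revAt_eq_self_of_lt (by omega)]; omega

lemma reflect_reflect {f : Polynomial ℂ} (m : ℕ) :
    Polynomial.reflect m (Polynomial.reflect m f) = f := by
  ext k
  rw [Polynomial.coeff_reflect, Polynomial.coeff_reflect, Polynomial.revAt_invol]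

end PolyHelpers


section Cheb

lemma aeval_w_T (j : ℕ) :
    Polynomial.aeval ((RatFunc.X + RatFunc.X⁻¹) / 2 : RatFunc ℂ)
        (Polynomial.Chebyshev.T ℂ (j : ℤ))
      = (RatFunc.X ^ j + (RatFunc.X ^ j)⁻¹) / 2 := by
  have hX : (RatFunc.X : RatFunc ℂ) ≠ 0 := RatFunc.X_ne_zero
  induction j using Nat.twoStepInduction with
  | zero =>
    rw [Nat.cast_zero, Polynomial.Chebyshev.T_zero, map_one, pow_zero, inv_one]
    norm_num
  | one =>
    simp only [Nat.cast_one, Polynomial.Chebyshev.T_one, Polynomial.aeval_X, pow_one]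
  | more j ih1 ih2 =>
    rw [show (((j+2 : ℕ)) : ℤ) = (j : ℤ) + 2 by push_cast; ring,
      Polynomial.Chebyshev.T_add_two, map_sub, map_mul, map_mul, Polynomial.aeval_X,
      map_ofNat, show ((j:ℤ) + 1) = ((j+1 : ℕ) : ℤ) by push_cast; ring, ih2, ih1]
    have h1 : (RatFunc.X : RatFunc ℂ) ^ (j+1) ≠ 0 := pow_ne_zero _ hX
    have h2 : (RatFunc.X : RatFunc ℂ) ^ (j+2) ≠ 0 := pow_ne_zero _ hX
    have h0 : (RatFunc.X : RatFunc ℂ) ^ j ≠ 0 := pow_ne_zero _ hX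
    field_simp
    ring

end Cheb

section SelfRecip

lemma selfrecip (m : ℕ) (N : Polynomial ℂ) (hdeg : N.natDegree ≤ 2*m)
    (hsym : Polynomial.reflect (2*m) N = N) :
    ∃ g : Polynomial ℂ, algebraMap (Polynomial ℂ) (RatFunc ℂ) N
      = RatFunc.X ^ m *
        Polynomial.aeval ((RatFunc.X + RatFunc.X⁻¹) / 2 : RatFunc ℂ) g := by
  classical
  have hX : (RatFunc.X : RatFunc ℂ) ≠ 0 := RatFunc.X_ne_zero
  have hcoe : ∀ i, i ≤ 2*m → N.coeff i = N.coeff (2*m - i) := fun i hi => by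
    conv_lhs => rw [← hsym]
    rw [Polynomial.coeff_reflect, Polynomial.revAt_le hi]
  refine ⟨Polynomial.C (N.coeff m) + ∑ j ∈ Finset.range m,
    Polynomial.C (2 * N.coeff (m+1+j)) * Polynomial.Chebyshev.T ℂ ((j : ℤ)+1), ?_⟩
  -- RHS computation
  have hT : ∀ j : ℕ, Polynomial.aeval ((RatFunc.X + RatFunc.X⁻¹) / 2 : RatFunc ℂ)
      (Polynomial.Chebyshev.T ℂ ((j : ℤ)+1))
      = (RatFunc.X ^ (j+1) + (RatFunc.X ^ (j+1))⁻¹) / 2 := fun j => by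
    rw [show ((j:ℤ)+1) = ((j+1 : ℕ) : ℤ) by push_cast; ring, aeval_w_T]
  rw [map_add, map_sum, Polynomial.aeval_C, RatFunc.algebraMap_eq_C]
  simp only [map_mul, Polynomial.aeval_C, RatFunc.algebraMap_eq_C, hT]
  -- termwise identity
  have hterm : ∀ j ∈ Finset.range m,
      RatFunc.X ^ m * (RatFunc.C 2 * RatFunc.C (N.coeff (m+1+j)) *
        ((RatFunc.X ^ (j+1) + (RatFunc.X ^ (j+1))⁻¹) / 2))
      = RatFunc.C (N.coeff (m+1+j)) * RatFunc.X ^ (m+1+j)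
        + RatFunc.C (N.coeff (m+1+j)) * RatFunc.X ^ (m-1-j) := by
    intro j hj
    rw [Finset.mem_range] at hj
    have hpow : (RatFunc.X : RatFunc ℂ) ^ m * (RatFunc.X ^ (j+1))⁻¹
        = RatFunc.X ^ (m-1-j) := by
      have hsplit : (RatFunc.X : RatFunc ℂ) ^ m
          = RatFunc.X ^ (m-1-j) * RatFunc.X ^ (j+1) := by
        rw [← pow_add]; congr 1; omega
      rw [hsplit, mul_inv_cancel_right₀ (pow_ne_zero _ hX)]
    have expand1 : RatFunc.X ^ m * (RatFunc.C 2 * RatFunc.C (N.coeff (m+1+j)) *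
        ((RatFunc.X ^ (j+1) + (RatFunc.X ^ (j+1))⁻¹) / 2))
        = RatFunc.C (N.coeff (m+1+j)) * (RatFunc.X ^ m * RatFunc.X ^ (j+1))
          + RatFunc.C (N.coeff (m+1+j)) * (RatFunc.X ^ m * (RatFunc.X ^ (j+1))⁻¹) := by
      rw [map_ofNat]
      ring
    rw [expand1, hpow, ← pow_add, show m + (j+1) = m+1+j by omega]
  -- LHS as a sum
  have hN : algebraMap (Polynomial ℂ) (RatFunc ℂ) N
      = ∑ i ∈ Finset.range (2*m+1), RatFunc.C (N.coeff i) * RatFunc.X ^ i := by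
    conv_lhs => rw [Polynomial.as_sum_range' N (2*m+1) (by omega)]
    rw [map_sum]
    refine Finset.sum_congr rfl (fun i _ => ?_)
    rw [← Polynomial.C_mul_X_pow_eq_monomial, map_mul, map_pow, RatFunc.algebraMap_C,
      RatFunc.algebraMap_X]
  rw [hN, show 2*m+1 = (m+1)+m by omega, Finset.sum_range_add, Finset.sum_range_succ]
  rw [mul_add, Finset.mul_sum]
  rw [Finset.sum_congr rfl hterm, Finset.sum_add_distrib]
  -- match the three pieces
  have hlow : ∑ i ∈ Finset.range m, RatFunc.C (N.coeff i) * RatFunc.X ^ i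
      = ∑ j ∈ Finset.range m, RatFunc.C (N.coeff (m+1+j)) * RatFunc.X ^ (m-1-j) := by
    rw [← Finset.sum_range_reflect
      (fun j => RatFunc.C (N.coeff (m+1+j)) * RatFunc.X ^ (m-1-j)) m]
    refine Finset.sum_congr rfl (fun i hi => ?_)
    rw [Finset.mem_range] at hi
    rw [show m+1+(m-1-i) = 2*m - i by omega, ← hcoe i (by omega),
      show m-1-(m-1-i) = i by omega]
  rw [hlow]
  ring
end SelfRecip


section Invariance

/-- A rational function invariant under `X ↦ ζX` is a rational function of `X^n`. -/
lemma sigma_invariant {n : ℕ} (hn : n ≠ 0) {ζ : ℂ} (hζ : IsPrimitiveRoot ζ n)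
    (hl : Transcendental ℂ (RatFunc.C ζ * RatFunc.X)) {H : RatFunc ℂ}
    (hH : subst hl H = H) :
    ∃ Sf : RatFunc ℂ, H = subst (trans_pow hn) Sf := by
  have hζ0 : ζ ≠ 0 := hζ.ne_zero hn
  have hq0 : H.denom ≠ 0 := H.denom_ne_zero
  set p := H.num with hp
  set q := H.denom with hq
  set ℓp : Polynomial ℂ := Polynomial.C ζ * Polynomial.X with hℓp
  set Q : ℕ → Polynomial ℂ := fun i => q.comp (Polynomial.C (ζ^i) * Polynomial.X) with hQ
  have hQmap : ∀ i, algebraMap _ (RatFunc ℂ) (Q i)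
      = Polynomial.aeval (RatFunc.C (ζ^i) * RatFunc.X) q := by
    intro i
    rw [hQ, algebraMap_comp]
    congr 1
    rw [map_mul, RatFunc.algebraMap_C, RatFunc.algebraMap_X]
  have hQ0 : ∀ i, Q i ≠ 0 := by
    intro i h0
    have h1 := hQmap i
    rw [h0, map_zero] at h1
    exact trans_ne_zero (trans_lin (pow_ne_zero i hζ0)) hq0 h1.symm
  have hQzero : Q 0 = q := by
    rw [hQ]
    simp
  have hQper : Q n = Q 0 := by
    rw [hQ]
    simp [hζ.pow_eq_one]
  have hQcomp : ∀ i, (Q i).comp ℓp = Q (i+1) := by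
    intro i
    rw [hQ, hℓp, Polynomial.comp_assoc]
    congr 1
    rw [Polynomial.mul_comp, Polynomial.C_comp, Polynomial.X_comp, pow_succ,
      Polynomial.C_mul]
    ring
  set D : Polynomial ℂ := ∏ i ∈ Finset.range n, Q i with hD
  set Nn : Polynomial ℂ := p * ∏ i ∈ Finset.range (n-1), Q (i+1) with hNn
  have hD0 : D ≠ 0 := Finset.prod_ne_zero_iff.mpr (fun i _ => hQ0 i)
  have hDsplit : D = (∏ i ∈ Finset.range (n-1), Q (i+1)) * Q 0 := by
    conv_lhs => rw [hD, show n = (n-1)+1 by omega, Finset.prod_range_succ']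
  have hqN_pD : p * D = Nn * q := by
    rw [hNn, hDsplit, hQzero]
    ring
  have hHrep : H = algebraMap _ _ Nn / algebraMap _ _ D := by
    conv_lhs => rw [← RatFunc.num_div_denom H]
    rw [div_eq_div_iff (RatFunc.algebraMap_ne_zero hq0) (RatFunc.algebraMap_ne_zero hD0),
      ← map_mul, ← map_mul]
    exact congrArg _ hqN_pD
  have hsub_poly : ∀ f : Polynomial ℂ, subst hl (algebraMap _ _ f)
      = algebraMap _ _ (f.comp ℓp) := by
    intro f
    rw [subst_algebraMap, algebraMap_comp]
    congr 1
    rw [hℓp, map_mul, RatFunc.algebraMap_C, RatFunc.algebraMap_X]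
  have hDstep : D.comp ℓp = ∏ i ∈ Finset.range n, Q (i+1) := by
    rw [hD, Polynomial.prod_comp]
    exact Finset.prod_congr rfl (fun i _ => hQcomp i)
  have hDinv : D.comp ℓp = D := by
    have hA1 : ∏ i ∈ Finset.range (n+1), Q i = D * Q n := Finset.prod_range_succ Q n
    have hA2 : ∏ i ∈ Finset.range (n+1), Q i
        = (∏ i ∈ Finset.range n, Q (i+1)) * Q 0 := Finset.prod_range_succ' Q n
    rw [hQper] at hA1
    rw [hDstep]
    exact (mul_right_cancel₀ (hQ0 0) (hA1.symm.trans hA2)).symm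
  have hNinv : Nn.comp ℓp = Nn := by
    have e1 : subst hl H = algebraMap _ _ (Nn.comp ℓp) / algebraMap _ _ D := by
      conv_lhs => rw [hHrep]
      rw [map_div₀, hsub_poly, hsub_poly, hDinv]
    rw [hH, hHrep] at e1
    rw [div_eq_div_iff (RatFunc.algebraMap_ne_zero hD0) (RatFunc.algebraMap_ne_zero hD0)]
      at e1
    have := mul_right_cancel₀ (RatFunc.algebraMap_ne_zero hD0) e1
    exact (RatFunc.algebraMap_injective ℂ this).symm
  have hcoeff : ∀ (f : Polynomial ℂ), f.comp ℓp = f → ∀ k, f.coeff k ≠ 0 → n ∣ k := by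
    intro f hf k hk
    have h1 := congrArg (fun r => Polynomial.coeff r k) hf
    simp only [hℓp] at h1
    rw [comp_C_mul_X_coeff] at h1
    have h2 : ζ ^ k * f.coeff k = 1 * f.coeff k := by rw [h1, one_mul]
    exact (hζ.pow_eq_one_iff_dvd k).mp (mul_right_cancel₀ hk h2)
  refine ⟨algebraMap _ _ (Polynomial.contract n Nn)
    / algebraMap _ _ (Polynomial.contract n D), ?_⟩
  rw [subst_div, ← algebraMap_expand, ← algebraMap_expand,
    eq_expand_contract hn (hcoeff Nn hNinv), eq_expand_contract hn (hcoeff D hDinv),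
    ← hHrep]

/-- A rational function invariant under `X ↦ 1/X` is a rational function of
`(X + 1/X)/2`. -/
lemma tau_invariant {H : RatFunc ℂ} (hH : subst trans_inv H = H) :
    ∃ B : RatFunc ℂ, subst trans_w B = H := by
  have hX : (RatFunc.X : RatFunc ℂ) ≠ 0 := RatFunc.X_ne_zero
  set p := H.num with hp
  set q := H.denom with hq
  set m := max p.natDegree q.natDegree with hm
  have hpdeg : p.natDegree ≤ m := le_max_left _ _
  have hqdeg : q.natDegree ≤ m := le_max_right _ _
  have hq0 : q ≠ 0 := H.denom_ne_zero
  haveI : Invertible ((RatFunc.X : RatFunc ℂ)⁻¹) := invertibleOfNonzero (inv_ne_zero hX)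
  have href : ∀ f : Polynomial ℂ, f.natDegree ≤ m →
      Polynomial.aeval ((RatFunc.X : RatFunc ℂ)⁻¹) f
        = algebraMap _ _ (Polynomial.reflect m f) * ((RatFunc.X : RatFunc ℂ) ^ m)⁻¹ := by
    intro f hf
    have h1 := Polynomial.eval₂_reflect_mul_pow (algebraMap ℂ (RatFunc ℂ))
      ((RatFunc.X : RatFunc ℂ)⁻¹) m f hf
    rw [invOf_eq_inv, inv_inv] at h1
    rw [Polynomial.aeval_def, ← h1, ← Polynomial.aeval_def, aeval_ratX, inv_pow]
  have hrq0 : Polynomial.reflect m q ≠ 0 :=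
    fun h => hq0 (by rwa [Polynomial.reflect_eq_zero_iff] at h)
  have key : Polynomial.reflect m p * q = p * Polynomial.reflect m q := by
    have e : algebraMap (Polynomial ℂ) (RatFunc ℂ) (Polynomial.reflect m p)
          / algebraMap (Polynomial ℂ) (RatFunc ℂ) (Polynomial.reflect m q)
        = algebraMap (Polynomial ℂ) (RatFunc ℂ) p
          / algebraMap (Polynomial ℂ) (RatFunc ℂ) q := by
      have h2 : subst trans_inv H
          = algebraMap (Polynomial ℂ) (RatFunc ℂ) (Polynomial.reflect m p)
              * ((RatFunc.X : RatFunc ℂ) ^ m)⁻¹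
            / (algebraMap (Polynomial ℂ) (RatFunc ℂ) (Polynomial.reflect m q)
              * ((RatFunc.X : RatFunc ℂ) ^ m)⁻¹) := by
        rw [← rcomp_eq_subst, rcomp, ← hp, ← hq, href p hpdeg, href q hqdeg]
      rw [mul_div_mul_right _ _ (inv_ne_zero (pow_ne_zero m hX))] at h2
      rw [← h2, hH]
      conv_lhs => rw [← RatFunc.num_div_denom H]
    rw [div_eq_div_iff (RatFunc.algebraMap_ne_zero hrq0) (RatFunc.algebraMap_ne_zero hq0),
      ← map_mul, ← map_mul] at e
    exact RatFunc.algebraMap_injective ℂ e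
  set N := p * Polynomial.reflect m q with hN
  set D := q * Polynomial.reflect m q with hD
  have hD0 : D ≠ 0 := mul_ne_zero hq0 hrq0
  have hNdeg : N.natDegree ≤ 2*m := by
    refine le_trans (Polynomial.natDegree_mul_le) ?_
    have := natDegree_reflect_le hqdeg
    omega
  have hDdeg : D.natDegree ≤ 2*m := by
    refine le_trans (Polynomial.natDegree_mul_le) ?_
    have := natDegree_reflect_le hqdeg
    omega
  have hNsym : Polynomial.reflect (2*m) N = N := by
    rw [hN, show 2*m = m + m by ring,
      Polynomial.reflect_mul p (Polynomial.reflect m q) hpdeg (natDegree_reflect_le hqdeg),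
      reflect_reflect, key]
  have hDsym : Polynomial.reflect (2*m) D = D := by
    rw [hD, show 2*m = m + m by ring,
      Polynomial.reflect_mul q (Polynomial.reflect m q) hqdeg (natDegree_reflect_le hqdeg),
      reflect_reflect, mul_comm]
  obtain ⟨gN, hgN⟩ := selfrecip m N hNdeg hNsym
  obtain ⟨gD, hgD⟩ := selfrecip m D hDdeg hDsym
  refine ⟨algebraMap _ _ gN / algebraMap _ _ gD, ?_⟩
  rw [subst_div]
  have hDK : algebraMap _ (RatFunc ℂ) D ≠ 0 := RatFunc.algebraMap_ne_zero hD0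
  have hHND : H = algebraMap _ _ N / algebraMap _ _ D := by
    conv_lhs => rw [← RatFunc.num_div_denom H]
    rw [div_eq_div_iff (RatFunc.algebraMap_ne_zero hq0) hDK, ← map_mul, ← map_mul]
    exact congrArg _ (by rw [hN, hD]; ring)
  rw [hHND, hgN, hgD, mul_div_mul_left _ _ (pow_ne_zero m hX)]

end Invariance


lemma subst_congr {g₁ g₂ : RatFunc ℂ} (h₁ : Transcendental ℂ g₁) (h₂ : Transcendental ℂ g₂)
    (h : g₁ = g₂) (F : RatFunc ℂ) : subst h₁ F = subst h₂ F := by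
  subst h; rfl

theorem dihedral_equivariant' (n : ℕ) (hn : 2 < n) (ζ : ℂ) (hζ : IsPrimitiveRoot ζ n)
    (F : RatFunc ℂ) :
    (((∃ r : ℤ, Int.gcd r n = 1 ∧
          rcomp F (RatFunc.C ζ * RatFunc.X) = RatFunc.C (ζ ^ r) * F) ∧
        (∃ k : ℤ, F * rcomp F RatFunc.X⁻¹ = RatFunc.C (ζ ^ k))) ↔
      (∃ (ε : ℂ) (r : ℤ) (R : RatFunc ℂ), ε ^ (2 * n) = 1 ∧ Int.gcd r n = 1 ∧
        R * rcomp R RatFunc.X⁻¹ = 1 ∧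
        F = RatFunc.C ε * RatFunc.X ^ r * rcomp R (RatFunc.X ^ n))) ∧
    (∀ (ε : ℂ) (r : ℤ) (R : RatFunc ℂ), ε ^ (2 * n) = 1 → Int.gcd r n = 1 →
      R * rcomp R RatFunc.X⁻¹ = 1 →
      F = RatFunc.C ε * RatFunc.X ^ r * rcomp R (RatFunc.X ^ n) →
      ∃ A : RatFunc ℂ,
        rcomp A ((RatFunc.X ^ n + (RatFunc.X ^ n)⁻¹) / 2) = (F ^ n + (F ^ n)⁻¹) / 2 ∧
        rcomp A ((RatFunc.X + RatFunc.X⁻¹) / 2) =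
          RatFunc.C (ε ^ n) *
            ((RatFunc.X ^ r * R ^ n + (RatFunc.X ^ r * R ^ n)⁻¹) / 2) ∧
        ∀ A' : RatFunc ℂ,
          rcomp A' ((RatFunc.X ^ n + (RatFunc.X ^ n)⁻¹) / 2) =
              (F ^ n + (F ^ n)⁻¹) / 2 →
          A' = A) := by
  have hn0 : n ≠ 0 := by omega
  haveI : NeZero n := ⟨hn0⟩
  have hζ0 : ζ ≠ 0 := hζ.ne_zero hn0
  have hX : (RatFunc.X : RatFunc ℂ) ≠ 0 := RatFunc.X_ne_zero
  have hl : Transcendental ℂ (RatFunc.C ζ * RatFunc.X) := trans_lin hζ0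
  have hpn : Transcendental ℂ ((RatFunc.X : RatFunc ℂ) ^ n) := trans_pow hn0
  have hXzr : ∀ s : ℤ, subst hl (RatFunc.X ^ s) = RatFunc.C (ζ ^ s) * RatFunc.X ^ s := by
    intro s
    rw [map_zpow₀, subst_X, mul_zpow, ← map_zpow₀ RatFunc.C]
  have hτXz : ∀ s : ℤ, subst trans_inv ((RatFunc.X : RatFunc ℂ) ^ s)
      = RatFunc.X ^ (-s) := by
    intro s
    rw [map_zpow₀, subst_X, inv_zpow, ← zpow_neg]
  have hσXn : subst hl ((RatFunc.X : RatFunc ℂ) ^ n) = RatFunc.X ^ n := by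
    rw [map_pow, subst_X, mul_pow, ← map_pow, hζ.pow_eq_one, map_one, one_mul]
  have hσπ : ∀ E : RatFunc ℂ, subst hl (subst hpn E) = subst hpn E := by
    intro E
    rw [subst_subst]
    exact subst_congr _ _ hσXn E
  have hcomm : ∀ E : RatFunc ℂ,
      subst trans_inv (subst hpn E) = subst hpn (subst trans_inv E) := by
    intro E
    rw [subst_subst, subst_subst]
    exact subst_congr _ _ (by rw [map_pow, subst_X, map_inv₀, subst_X, inv_pow]) E
  have hzpow_comm : ∀ (s : ℤ), ((RatFunc.X : RatFunc ℂ) ^ s) ^ n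
      = ((RatFunc.X : RatFunc ℂ) ^ n) ^ s := by
    intro s
    rw [← zpow_natCast ((RatFunc.X : RatFunc ℂ) ^ s) n, ← zpow_mul, mul_comm, zpow_mul,
      zpow_natCast]
  constructor
  · constructor
    · rintro ⟨⟨r, hrn, hrF⟩, ⟨k, hkF⟩⟩
      rw [rcomp_eq_subst hl] at hrF
      rw [rcomp_eq_subst trans_inv] at hkF
      have hCek : (RatFunc.C (ζ ^ k) : RatFunc ℂ) ≠ 0 := C_ne_zero (zpow_ne_zero k hζ0)
      have hF0 : F ≠ 0 := by
        intro h0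
        rw [h0, map_zero, zero_mul] at hkF
        exact hCek hkF.symm
      set H : RatFunc ℂ := F * RatFunc.X ^ (-r) with hHdef
      have hCr : (RatFunc.C (ζ ^ r) : RatFunc ℂ) ≠ 0 := C_ne_zero (zpow_ne_zero r hζ0)
      have hσH : subst hl H = H := by
        rw [hHdef, map_mul, hrF, hXzr, zpow_neg, map_inv₀]
        rw [show RatFunc.C (ζ^r) * F * ((RatFunc.C (ζ^r))⁻¹ * RatFunc.X^(-r))
            = (RatFunc.C (ζ^r) * (RatFunc.C (ζ^r))⁻¹) * (F * RatFunc.X^(-r)) from by ring]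
        rw [mul_inv_cancel₀ hCr, one_mul]
      obtain ⟨Sf, hSf⟩ := sigma_invariant hn0 hζ hl hσH
      have hHτH : H * subst trans_inv H = RatFunc.C (ζ ^ k) := by
        rw [hHdef, map_mul, hτXz, neg_neg]
        calc F * RatFunc.X ^ (-r) * (subst trans_inv F * RatFunc.X ^ r)
            = (F * subst trans_inv F) * (RatFunc.X ^ (-r) * RatFunc.X ^ r) := by ring
          _ = RatFunc.C (ζ ^ k) := by
              rw [hkF, ← zpow_add₀ hX, neg_add_cancel, zpow_zero, mul_one]
      have hπ : subst hpn (Sf * subst trans_inv Sf) = RatFunc.C (ζ ^ k) := by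
        rw [map_mul, ← hcomm, ← hSf]
        exact hHτH
      have hSτS : Sf * subst trans_inv Sf = RatFunc.C (ζ ^ k) :=
        subst_inj hpn (by rw [hπ, subst_C])
      obtain ⟨ε, hε2⟩ := IsAlgClosed.exists_pow_nat_eq (ζ ^ k : ℂ) (n := 2) (by norm_num)
      have hε0 : ε ≠ 0 := by
        intro h
        rw [h, zero_pow (by norm_num : (2:ℕ) ≠ 0)] at hε2
        exact zpow_ne_zero k hζ0 hε2.symm
      refine ⟨ε, r, RatFunc.C ε⁻¹ * Sf, ?_, hrn, ?_, ?_⟩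
      · calc ε ^ (2*n) = (ε^2)^n := by rw [← pow_mul]
          _ = (ζ^k)^n := by rw [hε2]
          _ = (ζ^(n:ℕ))^k := by
              rw [← zpow_natCast (ζ^k) n, ← zpow_mul, mul_comm, zpow_mul, zpow_natCast]
          _ = 1 := by rw [hζ.pow_eq_one, one_zpow]
      · rw [rcomp_eq_subst trans_inv, map_mul, subst_C]
        calc RatFunc.C ε⁻¹ * Sf * (RatFunc.C ε⁻¹ * subst trans_inv Sf)
            = RatFunc.C ε⁻¹ * RatFunc.C ε⁻¹ * (Sf * subst trans_inv Sf) := by ring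
          _ = RatFunc.C (ε⁻¹ * ε⁻¹ * ζ^k) := by rw [hSτS, ← map_mul, ← map_mul]
          _ = 1 := by
              rw [show ε⁻¹ * ε⁻¹ * ζ^k = (ε^2)⁻¹ * ζ^k by ring, hε2,
                inv_mul_cancel₀ (zpow_ne_zero k hζ0), map_one]
      · rw [rcomp_eq_subst hpn, map_mul, subst_C, ← hSf]
        rw [show RatFunc.C ε * RatFunc.X ^ r * (RatFunc.C ε⁻¹ * H)
            = (RatFunc.C ε * RatFunc.C ε⁻¹) * (RatFunc.X ^ r * H) from by ring]
        rw [← map_mul, mul_inv_cancel₀ hε0, map_one, one_mul, hHdef]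
        rw [show RatFunc.X ^ r * (F * RatFunc.X ^ (-r))
            = (RatFunc.X ^ r * RatFunc.X ^ (-r)) * F from by ring]
        rw [← zpow_add₀ hX, add_neg_cancel, zpow_zero, one_mul]
    · rintro ⟨ε, r, R, hε2n, hrn, hRτR, hFdef⟩
      have hε0 : ε ≠ 0 := by
        intro h
        rw [h, zero_pow (by positivity : 2*n ≠ 0)] at hε2n
        exact zero_ne_one hε2n
      rw [rcomp_eq_subst trans_inv] at hRτR
      rw [rcomp_eq_subst hpn] at hFdef
      constructor
      · refine ⟨r, hrn, ?_⟩
        rw [rcomp_eq_subst hl, hFdef, map_mul, map_mul, subst_C, hXzr, hσπ]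
        ring
      · obtain ⟨k', hk'n, hk'⟩ := hζ.eq_pow_of_pow_eq_one
          (ξ := ε^2) (by rw [← pow_mul]; exact hε2n)
        refine ⟨(k' : ℤ), ?_⟩
        rw [rcomp_eq_subst trans_inv, hFdef, map_mul, map_mul, subst_C, hτXz, hcomm]
        calc RatFunc.C ε * RatFunc.X ^ r * subst hpn R *
              (RatFunc.C ε * RatFunc.X ^ (-r) * subst hpn (subst trans_inv R))
            = (RatFunc.C ε * RatFunc.C ε) * (RatFunc.X ^ r * RatFunc.X ^ (-r)) *
              (subst hpn (R * subst trans_inv R)) := by rw [map_mul]; ring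
          _ = RatFunc.C (ε^2) := by
              rw [hRτR, map_one, mul_one, ← zpow_add₀ hX, add_neg_cancel, zpow_zero,
                mul_one, ← map_mul, ← pow_two]
          _ = RatFunc.C (ζ ^ (k' : ℤ)) := by rw [← hk', zpow_natCast]
  · intro ε r R hε2n hrn hRτR hFdef
    have hε0 : ε ≠ 0 := by
      intro h
      rw [h, zero_pow (by positivity : 2*n ≠ 0)] at hε2n
      exact zero_ne_one hε2n
    rw [rcomp_eq_subst trans_inv] at hRτR
    rw [rcomp_eq_subst hpn] at hFdef
    have hR0 : R ≠ 0 := by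
      intro h
      rw [h, zero_mul] at hRτR
      exact zero_ne_one hRτR
    have hτR : subst trans_inv R = R⁻¹ := eq_inv_of_mul_eq_one_right hRτR
    set G : RatFunc ℂ := RatFunc.X ^ r * R ^ n with hG
    have hG0 : G ≠ 0 := mul_ne_zero (zpow_ne_zero r hX) (pow_ne_zero n hR0)
    have hτG : subst trans_inv G = G⁻¹ := by
      rw [hG, map_mul, map_pow, map_zpow₀, subst_X, hτR, mul_inv, inv_zpow, inv_pow]
    set H0 : RatFunc ℂ := RatFunc.C (ε^n) * ((G + G⁻¹)/2) with hH0
    have hτH0 : subst trans_inv H0 = H0 := by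
      rw [hH0, map_mul, subst_C, map_div₀, map_add, hτG, map_inv₀, hτG, inv_inv,
        map_ofNat]
      ring
    obtain ⟨A, hA⟩ := tau_invariant hτH0
    have hεn : (ε^n)⁻¹ = ε^n := by
      have h1 : ε^n * ε^n = 1 := by
        rw [← pow_add, show n + n = 2*n by ring]
        exact hε2n
      exact (eq_inv_of_mul_eq_one_right h1).symm
    have hFn : F ^ n = RatFunc.C (ε^n) * subst hpn G := by
      rw [hFdef, hG, map_mul (subst hpn), map_pow (subst hpn), map_zpow₀ (subst hpn),
        subst_X, mul_pow, mul_pow, hzpow_comm, map_pow (RatFunc.C : ℂ →+* RatFunc ℂ)]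
      ring
    have huw : subst hpn ((RatFunc.X + RatFunc.X⁻¹)/2)
        = (RatFunc.X ^ n + ((RatFunc.X : RatFunc ℂ) ^ n)⁻¹)/2 := by
      rw [map_div₀, map_add, map_inv₀, subst_X, map_ofNat]
    have hu : Transcendental ℂ ((RatFunc.X ^ n + ((RatFunc.X : RatFunc ℂ) ^ n)⁻¹)/2) := by
      rw [← huw]
      exact trans_subst hpn trans_w
    have hπG0 : subst hpn G ≠ 0 :=
      fun h => hG0 (subst_inj hpn (by rw [h, map_zero]))
    have bullet2 : rcomp A ((RatFunc.X + RatFunc.X⁻¹)/2)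
        = RatFunc.C (ε ^ n) * ((RatFunc.X ^ r * R ^ n + (RatFunc.X ^ r * R ^ n)⁻¹)/2) := by
      rw [rcomp_eq_subst trans_w, hA, hH0, hG]
    have bullet1 : rcomp A ((RatFunc.X ^ n + ((RatFunc.X : RatFunc ℂ) ^ n)⁻¹)/2)
        = (F ^ n + (F ^ n)⁻¹)/2 := by
      rw [rcomp_eq_subst hu]
      have step : subst hu A = subst hpn (subst trans_w A) := by
        rw [subst_subst]
        exact subst_congr _ _ (by rw [huw]) A
      rw [step, hA, hH0, map_mul, subst_C, map_div₀, map_add, map_inv₀, map_ofNat, hFn]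
      rw [mul_inv, ← map_inv₀ RatFunc.C, hεn]
      ring
    refine ⟨A, bullet1, bullet2, ?_⟩
    intro A' hA'
    have h3 := hA'.trans bullet1.symm
    rw [rcomp_eq_subst hu, rcomp_eq_subst hu] at h3
    exact subst_inj hu h3


/-- **Theorem (equivariant rational functions for the dihedral group, and good solutions
of `A ∘ ½(z^n + z^{-n}) = ½(z^n + z^{-n}) ∘ F`).** A nonconstant `F` satisfies
`F(ζX) = ζ^r F(X)` (for some integer `r` coprime with `n`) and `F(X)·F(X⁻¹) = ζ^k` (for
some integer `k`) iff `F = ε X^r R(X^n)` with `ε^{2n} = 1`, `gcd(r,n) = 1`, and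
`R(X)·R(X⁻¹) = 1`; and in that case there is a unique `A` with
`A((X^n + X^{-n})/2) = (F^n + F^{-n})/2`, which moreover satisfies
`A((X + X⁻¹)/2) = ε^n (G + G⁻¹)/2` for `G = X^r R(X)^n`. -/
theorem dihedral_equivariant (n : ℕ) (hn : 2 < n) (ζ : ℂ) (hζ : IsPrimitiveRoot ζ n)
    (F : RatFunc ℂ) (hF : 1 ≤ rdeg F) :
    (((∃ r : ℤ, Int.gcd r n = 1 ∧
          rcomp F (RatFunc.C ζ * RatFunc.X) = RatFunc.C (ζ ^ r) * F) ∧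
        (∃ k : ℤ, F * rcomp F RatFunc.X⁻¹ = RatFunc.C (ζ ^ k))) ↔
      (∃ (ε : ℂ) (r : ℤ) (R : RatFunc ℂ), ε ^ (2 * n) = 1 ∧ Int.gcd r n = 1 ∧
        R * rcomp R RatFunc.X⁻¹ = 1 ∧
        F = RatFunc.C ε * RatFunc.X ^ r * rcomp R (RatFunc.X ^ n))) ∧
    (∀ (ε : ℂ) (r : ℤ) (R : RatFunc ℂ), ε ^ (2 * n) = 1 → Int.gcd r n = 1 →
      R * rcomp R RatFunc.X⁻¹ = 1 →
      F = RatFunc.C ε * RatFunc.X ^ r * rcomp R (RatFunc.X ^ n) →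
      ∃ A : RatFunc ℂ,
        rcomp A ((RatFunc.X ^ n + (RatFunc.X ^ n)⁻¹) / 2) = (F ^ n + (F ^ n)⁻¹) / 2 ∧
        rcomp A ((RatFunc.X + RatFunc.X⁻¹) / 2) =
          RatFunc.C (ε ^ n) *
            ((RatFunc.X ^ r * R ^ n + (RatFunc.X ^ r * R ^ n)⁻¹) / 2) ∧
        ∀ A' : RatFunc ℂ,
          rcomp A' ((RatFunc.X ^ n + (RatFunc.X ^ n)⁻¹) / 2) =
              (F ^ n + (F ^ n)⁻¹) / 2 →
          A' = A) := by
  exact dihedral_equivariant' n hn ζ hζ F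

end GenLattes
end
end
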